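/- arXiv:1612.08637 — 2 statements merged into one kernel-verified Lean document; each statement's English description precedes it below -/
import Mathlib

section
/- If f : ℝⁿ → ℂ is continuous and positive definite (not necessarily non-negative), then |f|^{2k} is a non-negative positive definite function for every k ∈ ℕ; consequently |V|⁻¹ ∫_V |f|^{2k} ≤ C_n(U,V) · |U|⁻¹ ∫_U |f|^{2k}. -/
open MeasureTheory Complex Pointwise

noncomputable section

/-- A continuous-type positive definiteness condition for complex-valued
functions on `ℝⁿ`: all finite quadratic forms are real and nonnegative. -/
def IsPosDefC {n : ℕ} (f : (Fin n → ℝ) → ℂ) : Prop :=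
  ∀ (X : Finset (Fin n → ℝ)) (c : (Fin n → ℝ) → ℂ),
    0 ≤ (∑ a ∈ X, ∑ b ∈ X, c a * (starRingEnd ℂ) (c b) * f (a - b)).re ∧
    (∑ a ∈ X, ∑ b ∈ X, c a * (starRingEnd ℂ) (c b) * f (a - b)).im = 0

/-- Positive definiteness for real-valued functions on `ℝⁿ`. -/
def IsPosDefR {n : ℕ} (f : (Fin n → ℝ) → ℝ) : Prop :=
  IsPosDefC (fun x => (f x : ℂ))

/-- The set of ratios `(|V|⁻¹ ∫_V f) / (|U|⁻¹ ∫_U f)` over nonzero continuous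
non-negative positive definite `f`. -/
def ratioSet (n : ℕ) (U V : Set (Fin n → ℝ)) : Set ℝ :=
  { c | ∃ f : (Fin n → ℝ) → ℝ, Continuous f ∧ (∀ x, 0 ≤ f x) ∧ IsPosDefR f ∧
      f ≠ 0 ∧ 0 < ∫ x in U, f x ∧
      c = ((volume V).toReal⁻¹ * ∫ x in V, f x) /
          ((volume U).toReal⁻¹ * ∫ x in U, f x) }

/-- The sharp constant `C_n(U,V)` in the doubling-type condition at the origin. -/
def doublingConst (n : ℕ) (U V : Set (Fin n → ℝ)) : ℝ := sSup (ratioSet n U V)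

/-- A `0`-symmetric convex body in `ℝⁿ`. -/
def IsSymConvexBody {n : ℕ} (U : Set (Fin n → ℝ)) : Prop :=
  Convex ℝ U ∧ IsCompact U ∧ (interior U).Nonempty ∧ U = -U
namespace PDAux

variable {n : ℕ}

/-- Generalized quadratic-form positivity: allows repeated points. -/
lemma merge {f : (Fin n → ℝ) → ℂ} (hpd : IsPosDefC f) {ι : Type*}
    (S : Finset ι) (e : ι → (Fin n → ℝ)) (c : ι → ℂ) :
    0 ≤ (∑ i ∈ S, ∑ j ∈ S, c i * (starRingEnd ℂ) (c j) * f (e i - e j)).re ∧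
    (∑ i ∈ S, ∑ j ∈ S, c i * (starRingEnd ℂ) (c j) * f (e i - e j)).im = 0 := by
  classical
  set X : Finset (Fin n → ℝ) := S.image e with hX
  set C : (Fin n → ℝ) → ℂ := fun x => ∑ i ∈ S with e i = x, c i with hC
  have sub : ∀ G : (Fin n → ℝ) → ℂ,
      ∑ a ∈ X, C a * G a = ∑ i ∈ S, c i * G (e i) := by
    intro G
    rw [← Finset.sum_fiberwise_of_maps_to (fun i hi => Finset.mem_image_of_mem e hi)
      (fun i => c i * G (e i))]
    refine Finset.sum_congr rfl fun a _ => ?_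
    rw [hC, Finset.sum_mul]
    exact Finset.sum_congr rfl fun i hi => by rw [(Finset.mem_filter.1 hi).2]
  have sub' : ∀ G : (Fin n → ℝ) → ℂ,
      ∑ b ∈ X, (starRingEnd ℂ) (C b) * G b = ∑ j ∈ S, (starRingEnd ℂ) (c j) * G (e j) := by
    intro G
    rw [← Finset.sum_fiberwise_of_maps_to (fun i hi => Finset.mem_image_of_mem e hi)
      (fun j => (starRingEnd ℂ) (c j) * G (e j))]
    refine Finset.sum_congr rfl fun b _ => ?_
    rw [hC, map_sum, Finset.sum_mul]
    exact Finset.sum_congr rfl fun i hi => by rw [(Finset.mem_filter.1 hi).2]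
  have key : ∑ a ∈ X, ∑ b ∈ X, C a * (starRingEnd ℂ) (C b) * f (a - b)
      = ∑ i ∈ S, ∑ j ∈ S, c i * (starRingEnd ℂ) (c j) * f (e i - e j) := by
    calc ∑ a ∈ X, ∑ b ∈ X, C a * (starRingEnd ℂ) (C b) * f (a - b)
        = ∑ a ∈ X, C a * ∑ b ∈ X, (starRingEnd ℂ) (C b) * f (a - b) := by
          refine Finset.sum_congr rfl fun a _ => ?_
          rw [Finset.mul_sum]; exact Finset.sum_congr rfl fun b _ => by ring
      _ = ∑ a ∈ X, C a * ∑ j ∈ S, (starRingEnd ℂ) (c j) * f (a - e j) := by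
          exact Finset.sum_congr rfl fun a _ => by rw [sub' (fun b => f (a - b))]
      _ = ∑ i ∈ S, c i * ∑ j ∈ S, (starRingEnd ℂ) (c j) * f (e i - e j) :=
          sub (fun a => ∑ j ∈ S, (starRingEnd ℂ) (c j) * f (a - e j))
      _ = ∑ i ∈ S, ∑ j ∈ S, c i * (starRingEnd ℂ) (c j) * f (e i - e j) := by
          refine Finset.sum_congr rfl fun i _ => ?_
          rw [Finset.mul_sum]; exact Finset.sum_congr rfl fun j _ => by ring
  have h := hpd X C
  rw [key] at h
  exact h

lemma f0_real {f : (Fin n → ℝ) → ℂ} (hpd : IsPosDefC f) :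
    0 ≤ (f 0).re ∧ (f 0).im = 0 := by
  have h := merge hpd (Finset.univ : Finset Unit) (fun _ => (0 : Fin n → ℝ)) (fun _ => 1)
  simpa using h

lemma herm {f : (Fin n → ℝ) → ℂ} (hpd : IsPosDefC f) (x : Fin n → ℝ) :
    f (-x) = (starRingEnd ℂ) (f x) := by
  have h1 := merge hpd (Finset.univ : Finset Bool)
    (fun b => if b then x else 0) (fun _ => 1)
  have h2 := merge hpd (Finset.univ : Finset Bool)
    (fun b => if b then x else 0) (fun b => if b then Complex.I else 1)
  have h0 := f0_real hpd
  simp only [Fintype.sum_bool, if_true, if_false, Bool.false_eq_true, sub_self, sub_zero,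
    zero_sub, map_one, mul_one, one_mul, Complex.add_im, Complex.conj_I, Complex.mul_im,
    Complex.I_re, Complex.I_im, Complex.neg_im, Complex.neg_re, Complex.one_re,
    Complex.one_im, Complex.mul_re] at h1 h2
  apply Complex.ext
  · simp only [Complex.conj_re]; nlinarith [h1.2, h2.2, h0.2]
  · simp only [Complex.conj_im]; nlinarith [h1.2, h2.2, h0.2]

lemma abs_le_f0 {f : (Fin n → ℝ) → ℂ} (hpd : IsPosDefC f) (x : Fin n → ℝ) :
    ‖f x‖ ≤ (f 0).re := by
  rcases eq_or_ne (f x) 0 with h | h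
  · simp [h, (f0_real hpd).1]
  set z := f x with hz
  set A : ℝ := ‖z‖ with hA
  have hh := herm hpd x
  have h2 := merge hpd (Finset.univ : Finset Bool)
    (fun b => if b then x else 0)
    (fun b => if b then ((starRingEnd ℂ) z) else -(A : ℂ))
  have ha : (0:ℝ) < A := norm_pos_iff.mpr h
  have hzz : z * (starRingEnd ℂ) z = ((A:ℂ))^2 := by
    rw [Complex.mul_conj, ← Complex.sq_norm]; push_cast; ring
  have key : (∑ i : Bool, ∑ j : Bool,
      (if i then ((starRingEnd ℂ) z) else -(A : ℂ)) *
      (starRingEnd ℂ) (if j then ((starRingEnd ℂ) z) else -(A : ℂ)) *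
      f ((if i then x else 0) - (if j then x else 0)))
      = 2 * ((A:ℂ))^2 * f 0 - 2 * ((A:ℂ))^3 := by
    simp only [Fintype.sum_bool, if_true, if_false, Bool.false_eq_true, sub_self, sub_zero,
      zero_sub, hh, map_neg, Complex.conj_conj, Complex.conj_ofReal, ← hz]
    linear_combination (f 0 - 2*(A:ℂ)) * hzz
  rw [key] at h2
  have hre : (2 * ((A:ℂ))^2 * f 0 - 2 * ((A:ℂ))^3).re
      = 2 * A^2 * (f 0).re - 2 * A^3 := by
    have : 2 * ((A:ℂ))^2 * f 0 - 2 * ((A:ℂ))^3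
        = ((2*A^2 : ℝ):ℂ) * f 0 - ((2*A^3 : ℝ):ℂ) := by push_cast; ring
    rw [this, Complex.sub_re, Complex.re_ofReal_mul, Complex.ofReal_re]
  rw [hre] at h2
  have h3 : 0 ≤ 2*A^2*((f 0).re - A) := by nlinarith [h2.1]
  nlinarith [h3, mul_pos ha ha]

end PDAux
namespace PDAux
open scoped ComplexOrder
open Matrix
variable {n : ℕ}

lemma gram_psd {f : (Fin n → ℝ) → ℂ} (hpd : IsPosDefC f) (X : Finset (Fin n → ℝ)) :
    Matrix.PosSemidef (Matrix.of fun i j : X => f (i.1 - j.1)) := by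
  classical
  refine Matrix.posSemidef_iff_dotProduct_mulVec.mpr ⟨?_, ?_⟩
  · ext i j
    simp only [Matrix.conjTranspose_apply, Matrix.of_apply]
    show (starRingEnd ℂ) (f (j.1 - i.1)) = f (i.1 - j.1)
    rw [← herm hpd, neg_sub]
  · intro x
    have h := hpd X (fun a => if h : a ∈ X then (starRingEnd ℂ) (x ⟨a, h⟩) else 0)
    rw [Complex.nonneg_iff]
    have key : dotProduct (star x)
        ((Matrix.of fun i j : X => f (i.1 - j.1)) *ᵥ x)
        = ∑ a ∈ X, ∑ b ∈ X,
          (if h : a ∈ X then (starRingEnd ℂ) (x ⟨a, h⟩) else 0) *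
          (starRingEnd ℂ) (if h : b ∈ X then (starRingEnd ℂ) (x ⟨b, h⟩) else 0) *
          f (a - b) := by
      rw [dotProduct, ← Finset.sum_coe_sort X
        (fun a => ∑ b ∈ X, _ * (starRingEnd ℂ) _ * f (a - b))]
      refine Finset.sum_congr rfl fun i _ => ?_
      rw [Matrix.mulVec, dotProduct, ← Finset.sum_coe_sort X, Finset.mul_sum]
      refine Finset.sum_congr rfl fun j _ => ?_
      simp only [Matrix.of_apply, Pi.star_apply, Finset.coe_mem, dif_pos,
        Complex.conj_conj]
      show (starRingEnd ℂ) (x i) * (f (i.1 - j.1) * x j) = _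
      ring
    rw [key]
    exact ⟨h.1, h.2.symm⟩

lemma hadamard_psd {m : Type*} [Fintype m] [DecidableEq m] {M N : Matrix m m ℂ}
    (hM : M.PosSemidef) (hN : N.PosSemidef) :
    Matrix.PosSemidef (Matrix.of fun i j => M i j * N i j) := by
  exact Matrix.PosSemidef.hadamard hM hN

lemma mul_posdef {f g : (Fin n → ℝ) → ℂ} (hf : IsPosDefC f) (hg : IsPosDefC g) :
    IsPosDefC (fun x => f x * g x) := by
  classical
  intro X c
  have hps := hadamard_psd (gram_psd hf X) (gram_psd hg X)
  have h2 := hps.dotProduct_mulVec_nonneg (fun i : X => (starRingEnd ℂ) (c i.1))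
  rw [Complex.nonneg_iff] at h2
  have key : dotProduct (star fun i : X => (starRingEnd ℂ) (c i.1))
      ((Matrix.of fun i j : X =>
          (Matrix.of fun i j : X => f (i.1 - j.1)) i j *
          (Matrix.of fun i j : X => g (i.1 - j.1)) i j) *ᵥ
        fun i : X => (starRingEnd ℂ) (c i.1))
      = ∑ a ∈ X, ∑ b ∈ X, c a * (starRingEnd ℂ) (c b) * (f (a - b) * g (a - b)) := by
    rw [dotProduct, ← Finset.sum_coe_sort X
      (fun a => ∑ b ∈ X, c a * (starRingEnd ℂ) (c b) * (f (a - b) * g (a - b)))]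
    refine Finset.sum_congr rfl fun i _ => ?_
    rw [Matrix.mulVec, dotProduct, ← Finset.sum_coe_sort X
      (fun b => c i.1 * (starRingEnd ℂ) (c b) * (f (i.1 - b) * g (i.1 - b))),
      Finset.mul_sum]
    refine Finset.sum_congr rfl fun j _ => ?_
    simp only [Matrix.of_apply, Pi.star_apply]
    show (starRingEnd ℂ) ((starRingEnd ℂ) (c i.1)) *
      (f (i.1 - j.1) * g (i.1 - j.1) * (starRingEnd ℂ) (c j.1)) = _
    rw [Complex.conj_conj]; ring
  rw [key] at h2
  exact ⟨h2.1, h2.2.symm⟩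

lemma conj_posdef {f : (Fin n → ℝ) → ℂ} (hf : IsPosDefC f) :
    IsPosDefC (fun x => (starRingEnd ℂ) (f x)) := by
  intro X c
  have h := hf X (fun a => (starRingEnd ℂ) (c a))
  have key : ∑ a ∈ X, ∑ b ∈ X, c a * (starRingEnd ℂ) (c b) * (starRingEnd ℂ) (f (a - b))
      = (starRingEnd ℂ) (∑ a ∈ X, ∑ b ∈ X,
          (starRingEnd ℂ) (c a) * (starRingEnd ℂ) ((starRingEnd ℂ) (c b)) * f (a - b)) := by
    rw [map_sum]
    refine Finset.sum_congr rfl fun a _ => ?_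
    rw [map_sum]
    refine Finset.sum_congr rfl fun b _ => ?_
    simp only [_root_.map_mul, Complex.conj_conj]
  constructor
  · rw [key, Complex.conj_re]; exact h.1
  · rw [key, Complex.conj_im, h.2, neg_zero]

lemma one_posdef : IsPosDefC (fun _ : Fin n → ℝ => (1 : ℂ)) := by
  intro X c
  have key : ∑ a ∈ X, ∑ b ∈ X, c a * (starRingEnd ℂ) (c b) * (1:ℂ)
      = (∑ a ∈ X, c a) * (starRingEnd ℂ) (∑ b ∈ X, c b) := by
    rw [map_sum, Finset.sum_mul_sum]
    exact Finset.sum_congr rfl fun a _ => Finset.sum_congr rfl fun b _ => by ring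
  constructor
  · rw [key, Complex.mul_conj]; simp [Complex.normSq_nonneg]
  · rw [key, Complex.mul_conj]; simp

lemma pow_posdef {f : (Fin n → ℝ) → ℂ} (hf : IsPosDefC f) (k : ℕ) :
    IsPosDefC (fun x => (f x) ^ k) := by
  induction k with
  | zero =>
    rw [show (fun x => (f x) ^ 0) = (fun _ : Fin n → ℝ => (1:ℂ)) from
      funext fun x => pow_zero _]
    exact one_posdef
  | succ k ih =>
    rw [show (fun x => (f x) ^ (k+1)) = (fun x => (f x) ^ k * f x) from
      funext fun x => pow_succ _ _]
    exact mul_posdef ih hf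

lemma abs_pow_posdef {f : (Fin n → ℝ) → ℂ} (hf : IsPosDefC f) (k : ℕ) :
    IsPosDefR (fun x => ‖f x‖ ^ (2 * k)) := by
  show IsPosDefC _
  rw [show (fun x => ((‖f x‖ ^ (2 * k) : ℝ) : ℂ))
      = fun x => (f x * (starRingEnd ℂ) (f x)) ^ k from ?_]
  · exact pow_posdef (mul_posdef hf (conj_posdef hf)) k
  · funext x
    rw [Complex.mul_conj, ← Complex.sq_norm]
    push_cast
    rw [← pow_mul]


end PDAux
namespace PDAux
variable {n : ℕ}

def box (c : Fin n → ℝ) (L : ℝ) : Set (Fin n → ℝ) :=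
  Set.pi Set.univ fun i => Set.Ico (c i) (c i + L)

def grid (c : Fin n → ℝ) (h : ℝ) (M : ℕ) : Finset (Fin n → ℝ) :=
  Fintype.piFinset fun i => (Finset.range M).image fun j : ℕ => c i + j * h

lemma mem_grid {c : Fin n → ℝ} {h : ℝ} {M : ℕ} {p : Fin n → ℝ} :
    p ∈ grid c h M ↔ ∀ i, ∃ j : ℕ, j < M ∧ p i = c i + j * h := by
  simp only [grid, Fintype.mem_piFinset, Finset.mem_image, Finset.mem_range]
  constructor
  · intro hp i; obtain ⟨j, hj, hje⟩ := hp i; exact ⟨j, hj, hje.symm⟩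
  · intro hp i; obtain ⟨j, hj, hje⟩ := hp i; exact ⟨j, hj, hje.symm⟩

lemma measurableSet_box (c : Fin n → ℝ) (L : ℝ) : MeasurableSet (box c L) :=
  MeasurableSet.univ_pi fun _ => measurableSet_Ico

lemma box_subset_Icc (c : Fin n → ℝ) (L : ℝ) :
    box c L ⊆ Set.pi Set.univ fun i => Set.Icc (c i) (c i + L) :=
  Set.pi_mono fun _ _ => Set.Ico_subset_Icc_self

lemma integrableOn_box {g : (Fin n → ℝ) → ℝ} (hg : Continuous g) (c : Fin n → ℝ) (L : ℝ) :
    IntegrableOn g (box c L) := by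
  refine IntegrableOn.mono_set ?_ (box_subset_Icc c L)
  exact hg.continuousOn.integrableOn_compact (isCompact_univ_pi fun i => isCompact_Icc)

lemma volume_box (c : Fin n → ℝ) {L : ℝ} (hL : 0 ≤ L) :
    volume (box c L) = ENNReal.ofReal L ^ n := by
  rw [box, volume_pi_pi]
  simp [Real.volume_Ico]

lemma volume_box_toReal (c : Fin n → ℝ) {L : ℝ} (hL : 0 ≤ L) :
    (volume (box c L)).toReal = L ^ n := by
  rw [volume_box c hL, ← ENNReal.ofReal_pow hL, ENNReal.toReal_ofReal (by positivity)]

lemma volume_box_lt_top (c : Fin n → ℝ) {L : ℝ} (hL : 0 ≤ L) :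
    volume (box c L) < ⊤ := by
  rw [volume_box c hL]
  exact ENNReal.pow_lt_top ENNReal.ofReal_lt_top

lemma grid_subset_Icc {c : Fin n → ℝ} {L : ℝ} {M : ℕ} (hM : 0 < M) (hL : 0 < L) :
    ↑(grid c (L / M) M) ⊆ Set.pi Set.univ fun i => Set.Icc (c i) (c i + L) := by
  intro p hp
  rw [Finset.mem_coe, mem_grid] at hp
  intro i _
  obtain ⟨j, hj, hje⟩ := hp i
  have hh : (0:ℝ) < L / M := by positivity
  constructor
  · rw [hje]; nlinarith [Nat.cast_nonneg (α := ℝ) j]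
  · rw [hje]
    have : (j:ℝ) + 1 ≤ M := by exact_mod_cast hj
    have h2 : ((j:ℝ) + 1) * (L / M) ≤ M * (L/M) := by
      apply mul_le_mul_of_nonneg_right this (le_of_lt hh)
    have h3 : (M:ℝ) * (L/M) = L := by field_simp
    nlinarith

lemma cover {c : Fin n → ℝ} {L : ℝ} {M : ℕ} (hM : 0 < M) (hL : 0 < L) :
    box c L = ⋃ p ∈ grid c (L / M) M, box p (L / M) := by
  have hh : (0:ℝ) < L / M := by positivity
  have hML : (M:ℝ) * (L/M) = L := by field_simp
  ext x
  simp only [Set.mem_iUnion, box, Set.mem_pi, Set.mem_univ, forall_true_left, Set.mem_Ico]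
  constructor
  · intro hx
    set p : Fin n → ℝ := fun i => c i + (⌊(x i - c i) / (L/M)⌋₊ : ℕ) * (L/M) with hp
    refine ⟨p, ?_, ?_⟩
    · rw [mem_grid]
      intro i
      refine ⟨⌊(x i - c i) / (L/M)⌋₊, ?_, rfl⟩
      have h0 : 0 ≤ (x i - c i) / (L/M) :=
        div_nonneg (sub_nonneg.mpr (hx i).1) (le_of_lt hh)
      rw [Nat.floor_lt h0, div_lt_iff₀ hh, hML]
      linarith [(hx i).2]
    · intro i
      have h0 : 0 ≤ (x i - c i) / (L/M) :=
        div_nonneg (sub_nonneg.mpr (hx i).1) (le_of_lt hh)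
      have hfl : (⌊(x i - c i) / (L/M)⌋₊ : ℝ) * (L/M) ≤ x i - c i :=
        (le_div_iff₀ hh).mp (Nat.floor_le h0)
      have hfl2 : x i - c i < ((⌊(x i - c i) / (L/M)⌋₊ : ℝ) + 1) * (L/M) :=
        (div_lt_iff₀ hh).mp (Nat.lt_floor_add_one ((x i - c i) / (L/M)))
      constructor
      · show c i + (⌊(x i - c i) / (L/M)⌋₊ : ℝ) * (L/M) ≤ x i
        linarith
      · show x i < c i + (⌊(x i - c i) / (L/M)⌋₊ : ℝ) * (L/M) + L/M
        nlinarith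
  · rintro ⟨p, hp, hxp⟩
    rw [mem_grid] at hp
    intro i
    obtain ⟨j, hj, hje⟩ := hp i
    have h1 := (hxp i).1
    have h2 := (hxp i).2
    have hjM : (j:ℝ) + 1 ≤ M := by exact_mod_cast hj
    have hmul := mul_le_mul_of_nonneg_right hjM (le_of_lt hh)
    constructor
    · rw [hje] at h1; nlinarith [Nat.cast_nonneg (α := ℝ) j]
    · rw [hje] at h2; nlinarith

lemma grid_disjoint {c : Fin n → ℝ} {h : ℝ} (hh : 0 < h) {M : ℕ} :
    Set.Pairwise ((grid c h M : Finset (Fin n → ℝ)) : Set (Fin n → ℝ)) (Function.onFun Disjoint fun p => box p h) := by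
  intro p hp q hq hpq
  rw [Finset.mem_coe, mem_grid] at hp hq
  rw [Function.onFun, Set.disjoint_left]
  intro x hxp hxq
  apply hpq
  funext i
  obtain ⟨j, _, hje⟩ := hp i
  obtain ⟨j', _, hje'⟩ := hq i
  have h1 := (hxp i trivial).1
  have h2 := (hxp i trivial).2
  have h1' := (hxq i trivial).1
  have h2' := (hxq i trivial).2
  rw [hje, hje']
  rcases lt_trichotomy j j' with hlt | heq | hgt
  · exfalso
    have : (j:ℝ) + 1 ≤ j' := by exact_mod_cast hlt
    rw [hje] at h2; rw [hje'] at h1'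
    nlinarith
  · rw [heq]
  · exfalso
    have : (j':ℝ) + 1 ≤ j := by exact_mod_cast hgt
    rw [hje] at h1; rw [hje'] at h2'
    nlinarith

lemma card_grid {c : Fin n → ℝ} {h : ℝ} (hh : 0 < h) {M : ℕ} :
    (grid c h M).card = M ^ n := by
  rw [grid, Fintype.card_piFinset]
  have hcard : ∀ i : Fin n, ((Finset.range M).image fun j : ℕ => c i + j * h).card = M := by
    intro i
    rw [Finset.card_image_of_injective _ ?_, Finset.card_range]
    intro a b hab
    simp only at hab
    have h1 : (a:ℝ) * h = b * h := by linarith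
    have h2 : (a:ℝ) = b := mul_right_cancel₀ (ne_of_gt hh) h1
    exact_mod_cast h2
  simp [hcard]

theorem riemann {g : (Fin n → ℝ) → ℝ} (hg : Continuous g) (c : Fin n → ℝ) {L : ℝ}
    (hL : 0 < L) :
    ∀ ε > 0, ∃ δ > 0, ∀ M : ℕ, 0 < M → L / M ≤ δ →
      |(L/M)^n * ∑ p ∈ grid c (L/M) M, g p - ∫ x in box c L, g x| ≤ ε := by
  intro ε hε
  set K := Set.pi Set.univ fun i => Set.Icc (c i) (c i + L) with hK
  have hKc : IsCompact K := isCompact_univ_pi fun i => isCompact_Icc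
  have hLn : (0:ℝ) < L ^ n := by positivity
  set ε' := ε / L ^ n with hε'
  have hε'0 : 0 < ε' := by positivity
  obtain ⟨δ₀, hδ₀, hUC⟩ := Metric.uniformContinuousOn_iff.mp
    (hKc.uniformContinuousOn_of_continuous hg.continuousOn) ε' hε'0
  refine ⟨δ₀ / 2, by positivity, fun M hM hMδ => ?_⟩
  set h := L / M with hh
  have hh0 : (0:ℝ) < h := by positivity
  have hML : (M:ℝ) * h = L := by rw [hh]; field_simp
  -- decomposition of the integral
  have hdecomp : ∫ x in box c L, g x = ∑ p ∈ grid c h M, ∫ x in box p h, g x := by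
    rw [cover hM hL]
    exact MeasureTheory.integral_biUnion_finset _ (fun p _ => measurableSet_box p h)
      (grid_disjoint hh0) (fun p _ => integrableOn_box hg p h)
  rw [hdecomp, Finset.mul_sum, ← Finset.sum_sub_distrib]
  refine le_trans (Finset.abs_sum_le_sum_abs _ _) ?_
  have hcell : ∀ p ∈ grid c h M, |h^n * g p - ∫ x in box p h, g x| ≤ ε' * h^n := by
    intro p hp
    have hvol : (volume (box p h)).toReal = h ^ n := volume_box_toReal p (le_of_lt hh0)
    have hconst : h^n * g p = ∫ _ in box p h, g p := by
      rw [setIntegral_const, measureReal_def, hvol, smul_eq_mul]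
    rw [hconst, ← integral_sub (integrableOn_const (C := g p) (volume_box_lt_top p hh0.le).ne)
      (integrableOn_box hg p h)]
    rw [← Real.norm_eq_abs]
    refine le_trans (norm_setIntegral_le_of_norm_le_const (volume_box_lt_top p hh0.le)
      (C := ε') ?_) (by rw [measureReal_def, hvol])
    · intro x hx
      rw [Real.norm_eq_abs, abs_sub_comm]
      have hpK : p ∈ K := grid_subset_Icc hM hL hp
      have hxK : x ∈ K := by
        have : x ∈ box c L := by rw [cover hM hL]; exact Set.mem_biUnion hp hx
        exact box_subset_Icc c L this
      have hdist : dist x p < δ₀ := by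
        refine lt_of_le_of_lt (dist_pi_le_iff (le_of_lt hh0) |>.mpr fun i => ?_)
          (lt_of_le_of_lt hMδ (by linarith))
        have hx1 : p i ≤ x i := (hx i trivial).1
        have hx2 : x i < p i + h := (hx i trivial).2
        rw [Real.dist_eq, abs_le]
        constructor <;> linarith
      exact le_of_lt (hUC x hxK p hpK hdist)
  refine le_trans (Finset.sum_le_sum hcell) ?_
  rw [Finset.sum_const, card_grid hh0, nsmul_eq_mul]
  rw [Nat.cast_pow]
  have heq : (M:ℝ)^n * (ε' * h^n) = ε' * ((M:ℝ) * h)^n := by ring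
  rw [heq, hML, hε', div_mul_cancel₀ _ (ne_of_gt hLn)]

end PDAux
namespace PDAux
variable {n : ℕ}

lemma shift_pair {g : (Fin n → ℝ) → ℝ} (hpd : IsPosDefR g) (G : Finset (Fin n → ℝ))
    (e : Fin n → ℝ) :
    (∑ p ∈ G, ∑ q ∈ G, g (p - q + e)) + (∑ p ∈ G, ∑ q ∈ G, g (p - q + -e))
      ≤ 2 * ∑ p ∈ G, ∑ q ∈ G, g (p - q) := by
  classical
  have h := merge hpd ((Finset.univ : Finset Bool) ×ˢ G)
    (fun bp => if bp.1 then bp.2 + e else bp.2) (fun bp => if bp.1 then (-1:ℂ) else 1)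
  have harg1 : ∀ p q : Fin n → ℝ, p + e - (q + e) = p - q := fun p q => by abel
  have harg2 : ∀ p q : Fin n → ℝ, p + e - q = p - q + e := fun p q => by abel
  have harg3 : ∀ p q : Fin n → ℝ, p - (q + e) = p - q + -e := fun p q => by abel
  have key : (∑ i ∈ (Finset.univ : Finset Bool) ×ˢ G, ∑ j ∈ (Finset.univ : Finset Bool) ×ˢ G,
      (if i.1 then (-1:ℂ) else 1) * (starRingEnd ℂ) (if j.1 then (-1:ℂ) else 1) *
      (fun x => (g x : ℂ)) ((if i.1 then i.2 + e else i.2) - (if j.1 then j.2 + e else j.2)))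
      = ((2 * (∑ p ∈ G, ∑ q ∈ G, g (p - q))
          - (∑ p ∈ G, ∑ q ∈ G, g (p - q + e))
          - (∑ p ∈ G, ∑ q ∈ G, g (p - q + -e)) : ℝ) : ℂ) := by
    rw [Finset.sum_product]
    simp only [Finset.sum_product, Fintype.sum_bool, if_true, if_false, Bool.false_eq_true,
      map_one, map_neg, mul_one, one_mul, neg_mul, mul_neg, neg_neg, harg1, harg2, harg3,
      add_neg_cancel_right]
    push_cast
    simp only [Finset.sum_add_distrib, Finset.sum_neg_distrib]
    ring
  rw [key] at h
  have h1 := h.1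
  rw [Complex.ofReal_re] at h1
  linarith

def shifts (t : ℝ) : Finset (Fin n → ℝ) := Fintype.piFinset fun _ => ({0, t} : Finset ℝ)

lemma grid_double_eq {c : Fin n → ℝ} {h : ℝ} (hh : 0 < h) {M : ℕ} :
    grid c h (2*M) = (shifts ((M:ℝ)*h)).biUnion fun v => (grid c h M).image fun p => p + v := by
  classical
  ext x
  simp only [Finset.mem_biUnion, Finset.mem_image, shifts, Fintype.mem_piFinset,
    Finset.mem_insert, Finset.mem_singleton]
  constructor
  · intro hx
    rw [mem_grid] at hx
    choose j hj hje using hx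
    refine ⟨fun i => if j i < M then 0 else (M:ℝ)*h, fun i => ?_,
      fun i => x i - if j i < M then 0 else (M:ℝ)*h, ?_, ?_⟩
    · by_cases hc : j i < M
      · simp [hc]
      · simp [hc]
    · rw [mem_grid]
      intro i
      by_cases hc : j i < M
      · refine ⟨j i, hc, ?_⟩
        simp only [hc, if_true]
        rw [hje i]; ring
      · refine ⟨j i - M, ?_, ?_⟩
        · have := hj i; omega
        · simp only [hc, if_false]
          rw [hje i, Nat.cast_sub (by omega)]
          ring
    · funext i; simp
  · rintro ⟨v, hv, p, hp, rfl⟩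
    rw [mem_grid] at hp ⊢
    intro i
    obtain ⟨j, hj, hje⟩ := hp i
    rcases hv i with hv0 | hvM
    · exact ⟨j, by omega, by rw [Pi.add_apply, hje, hv0]; ring⟩
    · refine ⟨j + M, by omega, ?_⟩
      rw [Pi.add_apply, hje, hvM]
      push_cast; ring

lemma shifts_disjoint {c : Fin n → ℝ} {h : ℝ} (hh : 0 < h) {M : ℕ} :
    Set.PairwiseDisjoint (↑(shifts ((M:ℝ)*h) : Finset (Fin n → ℝ)))
      fun v => (grid c h M).image fun p => p + v := by
  classical
  intro v hv v' hv' hvv'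
  simp only [Finset.mem_coe, shifts, Fintype.mem_piFinset, Finset.mem_insert,
    Finset.mem_singleton] at hv hv'
  rw [Function.onFun, Finset.disjoint_left]
  intro x hx hx'
  apply hvv'
  funext i
  simp only [Finset.mem_image] at hx hx'
  obtain ⟨p, hp, hpe⟩ := hx
  obtain ⟨p', hp', hpe'⟩ := hx'
  rw [mem_grid] at hp hp'
  obtain ⟨j, hj, hje⟩ := hp i
  obtain ⟨j', hj', hje'⟩ := hp' i
  have heq : p i + v i = p' i + v' i := by
    rw [show p i + v i = (p + v) i from rfl, show p' i + v' i = (p' + v') i from rfl,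
      hpe, hpe']
  rw [hje, hje'] at heq
  have hjM : (j:ℝ) < M := by exact_mod_cast hj
  have hjM' : (j':ℝ) < M := by exact_mod_cast hj'
  have hj0 : (0:ℝ) ≤ (j:ℝ) := Nat.cast_nonneg j
  have hj0' : (0:ℝ) ≤ (j':ℝ) := Nat.cast_nonneg j'
  have key1 : (j:ℝ) * h < M * h := mul_lt_mul_of_pos_right hjM hh
  have key2 : (j':ℝ) * h < M * h := mul_lt_mul_of_pos_right hjM' hh
  have key3 : (0:ℝ) ≤ (j:ℝ) * h := mul_nonneg hj0 hh.le
  have key4 : (0:ℝ) ≤ (j':ℝ) * h := mul_nonneg hj0' hh.le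
  rcases hv i with h1 | h1 <;> rcases hv' i with h2 | h2
  · rw [h1, h2]
  · exfalso; rw [h1, h2] at heq; linarith
  · exfalso; rw [h1, h2] at heq; linarith
  · rw [h1, h2]

lemma sum_grid_double {c : Fin n → ℝ} {h : ℝ} (hh : 0 < h) {M : ℕ}
    (F : (Fin n → ℝ) → ℝ) :
    ∑ x ∈ grid c h (2*M), F x
      = ∑ v ∈ shifts ((M:ℝ)*h), ∑ p ∈ grid c h M, F (p + v) := by
  classical
  rw [grid_double_eq hh, Finset.sum_biUnion (shifts_disjoint hh)]
  refine Finset.sum_congr rfl fun v _ => ?_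
  rw [Finset.sum_image]
  intro a _ b _ hab
  exact add_left_injective v hab

lemma card_shifts {t : ℝ} (ht : t ≠ 0) : (shifts t : Finset (Fin n → ℝ)).card = 2^n := by
  classical
  rw [shifts, Fintype.card_piFinset]
  have : ({0, t} : Finset ℝ).card = 2 := by
    rw [Finset.card_insert_of_notMem (by simp [Ne.symm ht]), Finset.card_singleton]
  simp [this]

lemma double_bound {g : (Fin n → ℝ) → ℝ} (hpd : IsPosDefR g)
    (c : Fin n → ℝ) {h : ℝ} (hh : 0 < h) {M : ℕ} (hM : 0 < M) :
    ∑ p ∈ grid c h (2*M), ∑ q ∈ grid c h (2*M), g (p - q)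
      ≤ 4^n * ∑ p ∈ grid c h M, ∑ q ∈ grid c h M, g (p - q) := by
  classical
  set G := grid c h M with hG
  set S : (Fin n → ℝ) → ℝ := fun e => ∑ p ∈ G, ∑ q ∈ G, g (p - q + e) with hS
  have hexp : ∑ p ∈ grid c h (2*M), ∑ q ∈ grid c h (2*M), g (p - q)
      = ∑ v ∈ shifts ((M:ℝ)*h), ∑ v' ∈ shifts ((M:ℝ)*h), S (v - v') := by
    rw [sum_grid_double hh (fun x => ∑ q ∈ grid c h (2*M), g (x - q))]
    refine Finset.sum_congr rfl fun v _ => ?_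
    have step : ∀ p : Fin n → ℝ, ∑ q ∈ grid c h (2*M), g (p + v - q)
        = ∑ v' ∈ shifts ((M:ℝ)*h), ∑ q ∈ G, g (p - q + (v - v')) := by
      intro p
      rw [sum_grid_double hh (fun y => g (p + v - y))]
      refine Finset.sum_congr rfl fun v' _ => Finset.sum_congr rfl fun q _ => ?_
      congr 1
      abel
    simp_rw [step]
    rw [Finset.sum_comm]
  rw [hexp]
  have pair : ∀ v ∈ shifts ((M:ℝ)*h), ∀ v' ∈ shifts ((M:ℝ)*h),
      S (v - v') + S (v' - v) ≤ 2 * S 0 := by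
    intro v _ v' _
    have hs := shift_pair hpd G (v - v')
    have hrw : v' - v = -(v - v') := by abel
    have hS0 : S 0 = ∑ p ∈ G, ∑ q ∈ G, g (p - q) := by
      rw [hS]
      exact Finset.sum_congr rfl fun p _ => Finset.sum_congr rfl fun q _ => by rw [add_zero]
    rw [hS0, hrw]
    exact hs
  have htot : (2:ℝ) * ∑ v ∈ shifts ((M:ℝ)*h), ∑ v' ∈ shifts ((M:ℝ)*h), S (v - v')
      ≤ 2 * (4^n * S 0) := by
    have hsymm : ∑ v ∈ shifts ((M:ℝ)*h), ∑ v' ∈ shifts ((M:ℝ)*h), S (v - v')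
        = ∑ v ∈ shifts ((M:ℝ)*h), ∑ v' ∈ shifts ((M:ℝ)*h), S (v' - v) :=
      Finset.sum_comm
    have hMh : (M:ℝ) * h ≠ 0 := by positivity
    calc (2:ℝ) * ∑ v ∈ shifts ((M:ℝ)*h), ∑ v' ∈ shifts ((M:ℝ)*h), S (v - v')
        = ∑ v ∈ shifts ((M:ℝ)*h), ∑ v' ∈ shifts ((M:ℝ)*h), (S (v - v') + S (v' - v)) := by
          rw [two_mul]
          nth_rewrite 2 [hsymm]
          rw [← Finset.sum_add_distrib]
          exact Finset.sum_congr rfl fun v _ => by rw [← Finset.sum_add_distrib]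
      _ ≤ ∑ v ∈ shifts ((M:ℝ)*h), ∑ v' ∈ shifts ((M:ℝ)*h), 2 * S 0 := by
          refine Finset.sum_le_sum fun v hv => Finset.sum_le_sum fun v' hv' => ?_
          exact pair v hv v' hv'
      _ = 2 * (4^n * S 0) := by
          rw [Finset.sum_const, Finset.sum_const, card_shifts hMh, nsmul_eq_mul, nsmul_eq_mul]
          push_cast
          rw [show ((2:ℝ)^n) * ((2^n) * (2 * S 0)) = 2 * ((2^n * 2^n) * S 0) by ring,
            ← mul_pow]
          norm_num
  have hfin : ∑ v ∈ shifts ((M:ℝ)*h), ∑ v' ∈ shifts ((M:ℝ)*h), S (v - v') ≤ 4^n * S 0 := by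
    linarith
  have hS0 : S 0 = ∑ p ∈ G, ∑ q ∈ G, g (p - q) := by
    rw [hS]
    exact Finset.sum_congr rfl fun p _ => Finset.sum_congr rfl fun q _ => by rw [add_zero]
  rw [hS0] at hfin
  exact hfin
lemma grid_mono {c : Fin n → ℝ} {h : ℝ} {M M' : ℕ} (hMM : M ≤ M') :
    grid c h M ⊆ grid c h M' := by
  intro p hp
  rw [mem_grid] at hp ⊢
  intro i
  obtain ⟨j, hj, hje⟩ := hp i
  exact ⟨j, lt_of_lt_of_le hj hMM, hje⟩

lemma D_mono {g : (Fin n → ℝ) → ℝ} (hg0 : ∀ x, 0 ≤ g x) {G G' : Finset (Fin n → ℝ)}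
    (hGG : G ⊆ G') :
    ∑ p ∈ G, ∑ q ∈ G, g (p - q) ≤ ∑ p ∈ G', ∑ q ∈ G', g (p - q) :=
  calc ∑ p ∈ G, ∑ q ∈ G, g (p - q)
      ≤ ∑ p ∈ G, ∑ q ∈ G', g (p - q) :=
        Finset.sum_le_sum fun p _ =>
          Finset.sum_le_sum_of_subset_of_nonneg hGG fun q _ _ => hg0 _
    _ ≤ ∑ p ∈ G', ∑ q ∈ G', g (p - q) :=
        Finset.sum_le_sum_of_subset_of_nonneg hGG fun p _ _ =>
          Finset.sum_nonneg fun q _ => hg0 _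

lemma double_iter {g : (Fin n → ℝ) → ℝ} (hpd : IsPosDefR g) (c : Fin n → ℝ) {h : ℝ}
    (hh : 0 < h) {M : ℕ} (hM : 0 < M) (m : ℕ) :
    ∑ p ∈ grid c h (2^m * M), ∑ q ∈ grid c h (2^m * M), g (p - q)
      ≤ (4:ℝ)^(n*m) * ∑ p ∈ grid c h M, ∑ q ∈ grid c h M, g (p - q) := by
  induction m with
  | zero => simp
  | succ m ih =>
    have h2 : 2^(m+1) * M = 2 * (2^m * M) := by ring
    rw [h2]
    calc ∑ p ∈ grid c h (2*(2^m * M)), ∑ q ∈ grid c h (2*(2^m * M)), g (p - q)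
        ≤ 4^n * ∑ p ∈ grid c h (2^m * M), ∑ q ∈ grid c h (2^m * M), g (p - q) :=
          double_bound hpd c hh (by positivity)
      _ ≤ 4^n * ((4:ℝ)^(n*m) * ∑ p ∈ grid c h M, ∑ q ∈ grid c h M, g (p - q)) :=
          mul_le_mul_of_nonneg_left ih (by positivity)
      _ = (4:ℝ)^(n*(m+1)) * ∑ p ∈ grid c h M, ∑ q ∈ grid c h M, g (p - q) := by
          rw [← mul_assoc, ← pow_add]
          congr 2
          ring

lemma lower_end {g : (Fin n → ℝ) → ℝ} (hg0 : ∀ x, 0 ≤ g x) (c : Fin n → ℝ) {h : ℝ}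
    (hh : 0 < h) {M : ℕ} :
    ∑ p ∈ grid c h M, ∑ q ∈ grid c h M, g (p - q)
      ≤ (M:ℝ)^n * ∑ r ∈ grid (fun _ => -((M:ℝ)*h)) h (2*M), g r := by
  have hsub : ∀ p ∈ grid c h M, ∑ q ∈ grid c h M, g (p - q)
      ≤ ∑ r ∈ grid (fun _ => -((M:ℝ)*h)) h (2*M), g r := by
    intro p hp
    have himg : ∑ q ∈ grid c h M, g (p - q)
        = ∑ r ∈ (grid c h M).image (fun q => p - q), g r := by
      rw [Finset.sum_image (fun a _ b _ hab => sub_right_injective hab)]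
    rw [himg]
    apply Finset.sum_le_sum_of_subset_of_nonneg ?_ (fun r _ _ => hg0 r)
    intro r hr
    simp only [Finset.mem_image] at hr
    obtain ⟨q, hq, rfl⟩ := hr
    rw [mem_grid] at hp hq ⊢
    intro i
    obtain ⟨jp, hjp, hjpe⟩ := hp i
    obtain ⟨jq, hjq, hjqe⟩ := hq i
    refine ⟨M + jp - jq, by omega, ?_⟩
    rw [Pi.sub_apply, hjpe, hjqe, Nat.cast_sub (by omega)]
    push_cast
    ring
  calc ∑ p ∈ grid c h M, ∑ q ∈ grid c h M, g (p - q)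
      ≤ ∑ _p ∈ grid c h M, ∑ r ∈ grid (fun _ => -((M:ℝ)*h)) h (2*M), g r :=
        Finset.sum_le_sum hsub
    _ = (M:ℝ)^n * ∑ r ∈ grid (fun _ => -((M:ℝ)*h)) h (2*M), g r := by
        rw [Finset.sum_const, card_grid hh, nsmul_eq_mul]
        push_cast
        ring

lemma upper_end {g : (Fin n → ℝ) → ℝ} (hg0 : ∀ x, 0 ≤ g x) {h : ℝ} (hh : 0 < h)
    {M : ℕ} :
    (M:ℝ)^n * ∑ r ∈ grid (fun _ => -((M:ℝ)*h)) h (2*M), g r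
      ≤ ∑ p ∈ grid (fun _ => (0:ℝ)) h (3*M), ∑ q ∈ grid (fun _ => (0:ℝ)) h (3*M), g (p - q) := by
  set W := grid (fun _ : Fin n => -((M:ℝ)*h)) h (2*M) with hW
  set G3 := grid (fun _ : Fin n => (0:ℝ)) h (3*M) with hG3
  set Gmid := grid (fun _ : Fin n => (M:ℝ)*h) h M with hGmid
  have hmid_sub : Gmid ⊆ G3 := by
    intro q hq
    rw [hGmid, mem_grid] at hq
    rw [hG3, mem_grid]
    intro i
    obtain ⟨j, hj, hje⟩ := hq i
    exact ⟨M + j, by omega, by rw [hje]; push_cast; ring⟩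
  have hinner : ∀ q ∈ Gmid, ∑ r ∈ W, g r ≤ ∑ p ∈ G3, g (p - q) := by
    intro q hq
    have himg : ∑ r ∈ W, g r = ∑ p ∈ W.image (fun r => r + q), g (p - q) := by
      rw [Finset.sum_image (fun a _ b _ hab => add_left_injective q hab)]
      exact Finset.sum_congr rfl fun r _ => by rw [add_sub_cancel_right]
    rw [himg]
    apply Finset.sum_le_sum_of_subset_of_nonneg ?_ (fun p _ _ => hg0 _)
    intro p hp
    simp only [Finset.mem_image] at hp
    obtain ⟨r, hr, rfl⟩ := hp
    rw [hW, mem_grid] at hr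
    rw [hGmid, mem_grid] at hq
    rw [hG3, mem_grid]
    intro i
    obtain ⟨jr, hjr, hjre⟩ := hr i
    obtain ⟨jq, hjq, hjqe⟩ := hq i
    refine ⟨jr + jq, by omega, ?_⟩
    rw [Pi.add_apply, hjre, hjqe]
    push_cast
    ring
  calc (M:ℝ)^n * ∑ r ∈ W, g r
      = ∑ _q ∈ Gmid, ∑ r ∈ W, g r := by
        rw [Finset.sum_const, hGmid, card_grid hh, nsmul_eq_mul]
        push_cast
        ring
    _ ≤ ∑ q ∈ Gmid, ∑ p ∈ G3, g (p - q) := Finset.sum_le_sum hinner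
    _ ≤ ∑ q ∈ G3, ∑ p ∈ G3, g (p - q) :=
        Finset.sum_le_sum_of_subset_of_nonneg hmid_sub fun q _ _ =>
          Finset.sum_nonneg fun p _ => hg0 _
    _ = ∑ p ∈ G3, ∑ q ∈ G3, g (p - q) := Finset.sum_comm

theorem integral_doubling {g : (Fin n → ℝ) → ℝ} (hg : Continuous g) (hg0 : ∀ x, 0 ≤ g x)
    (hpd : IsPosDefR g) {L : ℝ} (hL : 0 < L) (m : ℕ) :
    ∫ x in box (fun _ => -((2:ℝ)^m * L)) (2*((2:ℝ)^m * L)), g x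
      ≤ (4:ℝ)^(n*(m+2)) * ∫ x in box (fun _ => -L) (2*L), g x := by
  set T : ℝ := (2:ℝ)^m * L with hT
  have hT0 : 0 < T := by positivity
  set C : ℝ := (4:ℝ)^(n*(m+2)) with hC
  have hC0 : (0:ℝ) < C := by positivity
  set IA := ∫ x in box (fun _ : Fin n => -L) (2*L), g x with hIA
  set IB := ∫ x in box (fun _ : Fin n => -T) (2*T), g x with hIB
  refine le_of_forall_pos_le_add fun ε hε => ?_
  set ε' : ℝ := ε / (C + 1) with hε'
  have hε'0 : 0 < ε' := by positivity
  obtain ⟨δA, hδA, hA⟩ := riemann hg (fun _ : Fin n => -L) (by linarith : (0:ℝ) < 2*L) ε' hε'0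
  obtain ⟨δB, hδB, hB⟩ := riemann hg (fun _ : Fin n => -T) (by linarith : (0:ℝ) < 2*T) ε' hε'0
  set δ := min δA δB with hδ
  have hδ0 : 0 < δ := lt_min hδA hδB
  obtain ⟨N, hN⟩ := exists_nat_gt (L / δ)
  have hN0 : 0 < N := by
    by_contra hcon
    push_neg at hcon
    interval_cases N
    simp only [Nat.cast_zero] at hN
    have : 0 < L / δ := by positivity
    linarith
  have hLN : L / N ≤ δ := by
    rw [div_le_iff₀ (by positivity)]
    rw [div_lt_iff₀ hδ0] at hN
    nlinarith
  set h : ℝ := L / N with hh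
  have hh0 : 0 < h := by positivity
  -- Riemann approximations
  have hA2 : |h^n * (∑ p ∈ grid (fun _ : Fin n => -L) h (2*N), g p) - IA| ≤ ε' := by
    have heq : 2*L / ((2*N : ℕ):ℝ) = h := by
      rw [hh]; push_cast; rw [mul_div_mul_left _ _ (two_ne_zero)]
    have := hA (2*N) (by omega) (by rw [heq]; exact le_trans hLN (min_le_left _ _))
    rw [heq] at this
    exact this
  have hB2 : |h^n * (∑ p ∈ grid (fun _ : Fin n => -T) h (2*(2^m*N)), g p) - IB| ≤ ε' := by
    have heq : 2*T / ((2*(2^m*N) : ℕ):ℝ) = h := by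
      rw [hh, hT]
      push_cast
      rw [div_eq_div_iff (by positivity) (by positivity)]
      ring
    have := hB (2*(2^m*N)) (by positivity) (by rw [heq]; exact le_trans hLN (min_le_right _ _))
    rw [heq] at this
    exact this
  -- discrete chain
  set K : ℕ := 2^m * N with hK
  have hK0 : 0 < K := by positivity
  set A : ℝ := ∑ p ∈ grid (fun _ : Fin n => -L) h (2*N), g p with hAd
  set B : ℝ := ∑ p ∈ grid (fun _ : Fin n => -T) h (2*K), g p with hBd
  have hA_nonneg : 0 ≤ A := Finset.sum_nonneg fun p _ => hg0 p
  have hNh : (N:ℝ) * h = L := by rw [hh]; field_simp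
  have hKh : (K:ℝ) * h = T := by
    rw [hh, hK, hT]; push_cast; field_simp
  have chain : (K:ℝ)^n * B ≤ C * ((K:ℝ)^n * A) := by
    have s1 : (K:ℝ)^n * B ≤ ∑ p ∈ grid (fun _ : Fin n => (0:ℝ)) h (3*K),
        ∑ q ∈ grid (fun _ : Fin n => (0:ℝ)) h (3*K), g (p - q) := by
      have := upper_end (g := g) hg0 hh0 (M := K)
      rw [hKh] at this
      exact this
    have s2 : ∑ p ∈ grid (fun _ : Fin n => (0:ℝ)) h (3*K),
        ∑ q ∈ grid (fun _ : Fin n => (0:ℝ)) h (3*K), g (p - q)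
        ≤ ∑ p ∈ grid (fun _ : Fin n => (0:ℝ)) h (2^(m+2)*N),
          ∑ q ∈ grid (fun _ : Fin n => (0:ℝ)) h (2^(m+2)*N), g (p - q) := by
      apply D_mono hg0
      apply grid_mono
      rw [hK]
      ring_nf
      omega
    have s3 : ∑ p ∈ grid (fun _ : Fin n => (0:ℝ)) h (2^(m+2)*N),
        ∑ q ∈ grid (fun _ : Fin n => (0:ℝ)) h (2^(m+2)*N), g (p - q)
        ≤ C * ∑ p ∈ grid (fun _ : Fin n => (0:ℝ)) h N,
          ∑ q ∈ grid (fun _ : Fin n => (0:ℝ)) h N, g (p - q) :=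
      double_iter hpd _ hh0 hN0 (m+2)
    have s4 : ∑ p ∈ grid (fun _ : Fin n => (0:ℝ)) h N,
        ∑ q ∈ grid (fun _ : Fin n => (0:ℝ)) h N, g (p - q) ≤ (N:ℝ)^n * A := by
      have := lower_end (g := g) hg0 (fun _ : Fin n => (0:ℝ)) hh0 (M := N)
      rw [hNh] at this
      exact this
    have s5 : (N:ℝ)^n ≤ (K:ℝ)^n := by
      apply pow_le_pow_left₀ (by positivity)
      exact_mod_cast Nat.le_mul_of_pos_left N (by positivity)
    calc (K:ℝ)^n * B ≤ C * ((N:ℝ)^n * A) := by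
          refine le_trans s1 (le_trans s2 (le_trans s3 ?_))
          exact mul_le_mul_of_nonneg_left s4 hC0.le
      _ ≤ C * ((K:ℝ)^n * A) := by
          apply mul_le_mul_of_nonneg_left _ hC0.le
          exact mul_le_mul_of_nonneg_right s5 hA_nonneg
  have hBA : B ≤ C * A := by
    have hKn : (0:ℝ) < (K:ℝ)^n := by positivity
    have := chain
    rw [show C * ((K:ℝ)^n * A) = (K:ℝ)^n * (C * A) by ring] at this
    exact le_of_mul_le_mul_left this hKn
  -- conclude
  have habs1 : IB ≤ h^n * B + ε' := by
    have := abs_le.mp hB2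
    linarith [this.1, this.2]
  have habs2 : h^n * A ≤ IA + ε' := by
    have := abs_le.mp hA2
    linarith [this.1, this.2]
  have hhn : (0:ℝ) ≤ h^n := by positivity
  calc IB ≤ h^n * B + ε' := habs1
    _ ≤ h^n * (C * A) + ε' := by
        have := mul_le_mul_of_nonneg_left hBA hhn
        linarith
    _ = C * (h^n * A) + ε' := by ring
    _ ≤ C * (IA + ε') + ε' := by
        have := mul_le_mul_of_nonneg_left habs2 hC0.le
        linarith
    _ = C * IA + (C + 1) * ε' := by ring
    _ = C * IA + ε := by
        rw [hε', mul_div_cancel₀ _ (by positivity)]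

end PDAux
namespace PDAux
variable {n : ℕ}

lemma ball_subset_body {U : Set (Fin n → ℝ)} (hU : IsSymConvexBody U) :
    ∃ ρ : ℝ, 0 < ρ ∧ Metric.ball (0 : Fin n → ℝ) ρ ⊆ U := by
  obtain ⟨y, hy⟩ := hU.2.2.1
  obtain ⟨ρ, hρ, hball⟩ := Metric.isOpen_iff.mp isOpen_interior y hy
  have hballU : Metric.ball y ρ ⊆ U := subset_trans hball interior_subset
  have hballU' : Metric.ball (-y) ρ ⊆ U := by
    intro z hz
    have hmz : -z ∈ Metric.ball y ρ := by
      rw [Metric.mem_ball] at hz ⊢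
      rw [dist_eq_norm] at hz ⊢
      rw [show -z - y = -(z - -y) by abel, norm_neg]
      exact hz
    have : -z ∈ U := hballU hmz
    rw [hU.2.2.2, Set.mem_neg]
    exact this
  refine ⟨ρ, hρ, fun z hz => ?_⟩
  have h1 : y + z ∈ U := hballU (by
    rw [Metric.mem_ball, dist_eq_norm, add_sub_cancel_left]
    rw [Metric.mem_ball, dist_eq_norm, sub_zero] at hz
    exact hz)
  have h2 : -y + z ∈ U := hballU' (by
    rw [Metric.mem_ball, dist_eq_norm, show -y + z - -y = z by abel]
    rw [Metric.mem_ball, dist_eq_norm, sub_zero] at hz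
    exact hz)
  have := hU.1 h1 h2 (by norm_num : (0:ℝ) ≤ 1/2) (by norm_num : (0:ℝ) ≤ 1/2)
    (by norm_num : (1:ℝ)/2 + 1/2 = 1)
  have heq : (1/2 : ℝ) • (y + z) + (1/2 : ℝ) • (-y + z) = z := by
    rw [smul_add, smul_add, smul_neg]
    rw [show ((1:ℝ)/2) • y + ((1:ℝ)/2) • z + (-(((1:ℝ)/2) • y) + ((1:ℝ)/2) • z)
      = ((1:ℝ)/2) • z + ((1:ℝ)/2) • z by abel, ← add_smul]
    norm_num
  rwa [heq] at this

lemma mem_sym_box {L : ℝ} {x : Fin n → ℝ} :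
    x ∈ box (fun _ => -L) (2*L) ↔ ∀ i, -L ≤ x i ∧ x i < L := by
  simp only [box, Set.mem_pi, Set.mem_univ, forall_true_left, Set.mem_Ico]
  constructor <;> intro hx i <;> have := hx i <;> constructor <;> [skip; linarith;
    skip; linarith] <;> linarith [this.1, this.2]

lemma body_contains_box {U : Set (Fin n → ℝ)} (hU : IsSymConvexBody U) :
    ∃ L : ℝ, 0 < L ∧ box (fun _ => -L) (2*L) ⊆ U := by
  obtain ⟨ρ, hρ, hball⟩ := ball_subset_body hU
  refine ⟨ρ/4, by positivity, fun y hy => ?_⟩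
  rw [mem_sym_box] at hy
  apply hball
  rw [Metric.mem_ball]
  have hd : dist y 0 ≤ ρ/4 := by
    refine dist_pi_le_iff (by positivity) |>.mpr fun i => ?_
    rw [Real.dist_eq]
    simp only [Pi.zero_apply, sub_zero]
    rw [abs_le]
    exact ⟨(hy i).1, (hy i).2.le⟩
  linarith

lemma subset_sym_box {V : Set (Fin n → ℝ)} (hV : IsCompact V) :
    ∃ S : ℝ, 0 < S ∧ V ⊆ box (fun _ => -S) (2*S) := by
  obtain ⟨S', hS'⟩ := hV.isBounded.subset_closedBall 0
  refine ⟨|S'| + 1, by positivity, fun x hx => ?_⟩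
  rw [mem_sym_box]
  intro i
  have h1 : dist x 0 ≤ S' := Metric.mem_closedBall.mp (hS' hx)
  have h2 : |x i| ≤ S' := by
    have := dist_le_pi_dist x 0 i
    rw [Real.dist_eq] at this
    simp only [Pi.zero_apply, sub_zero] at this
    linarith
  have h3 := abs_le.mp (le_trans h2 (le_abs_self S'))
  constructor <;> [linarith [h3.1]; linarith [h3.2]]

lemma sym_box_mono {S T : ℝ} (hST : S ≤ T) :
    box (fun _ : Fin n => -S) (2*S) ⊆ box (fun _ => -T) (2*T) := by
  intro x hx
  rw [mem_sym_box] at hx ⊢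
  intro i
  exact ⟨by linarith [(hx i).1], by linarith [(hx i).2]⟩

lemma vol_toReal_pos {W : Set (Fin n → ℝ)} (hW : IsSymConvexBody W) :
    0 < (volume W).toReal := by
  have h0 : 0 < volume W :=
    lt_of_lt_of_le (isOpen_interior.measure_pos volume hW.2.2.1)
      (measure_mono interior_subset)
  exact ENNReal.toReal_pos h0.ne' hW.2.1.measure_lt_top.ne

lemma integral_V_le {U V : Set (Fin n → ℝ)} (hU : IsSymConvexBody U)
    (hV : IsSymConvexBody V) :
    ∃ C : ℝ, 0 < C ∧ ∀ g : (Fin n → ℝ) → ℝ, Continuous g → (∀ x, 0 ≤ g x) →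
      IsPosDefR g → ∫ x in V, g x ≤ C * ∫ x in U, g x := by
  obtain ⟨L, hL, hUbox⟩ := body_contains_box hU
  obtain ⟨S, hS, hVbox⟩ := subset_sym_box hV.2.1
  obtain ⟨m, hm⟩ := pow_unbounded_of_one_lt (S / L) (one_lt_two (α := ℝ))
  refine ⟨(4:ℝ)^(n*(m+2)), by positivity, fun g hg hg0 hpd => ?_⟩
  have hST : S ≤ (2:ℝ)^m * L := by
    rw [div_lt_iff₀ hL] at hm
    linarith
  have hVT : V ⊆ box (fun _ => -((2:ℝ)^m * L)) (2*((2:ℝ)^m * L)) :=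
    subset_trans hVbox (sym_box_mono hST)
  calc ∫ x in V, g x
      ≤ ∫ x in box (fun _ => -((2:ℝ)^m * L)) (2*((2:ℝ)^m * L)), g x :=
        setIntegral_mono_set (integrableOn_box hg _ _)
          (Filter.Eventually.of_forall fun x => hg0 x)
          (HasSubset.Subset.eventuallyLE hVT)
    _ ≤ (4:ℝ)^(n*(m+2)) * ∫ x in box (fun _ => -L) (2*L), g x :=
        integral_doubling hg hg0 hpd hL m
    _ ≤ (4:ℝ)^(n*(m+2)) * ∫ x in U, g x := by
        refine mul_le_mul_of_nonneg_left ?_ (by positivity)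
        exact setIntegral_mono_set (hg.continuousOn.integrableOn_compact hU.2.1)
          (Filter.Eventually.of_forall fun x => hg0 x)
          (HasSubset.Subset.eventuallyLE hUbox)

lemma ratio_bddAbove {U V : Set (Fin n → ℝ)} (hU : IsSymConvexBody U)
    (hV : IsSymConvexBody V) : BddAbove (ratioSet n U V) := by
  obtain ⟨C, hC, hbound⟩ := integral_V_le hU hV
  have ha : 0 < (volume U).toReal := vol_toReal_pos hU
  have hb : 0 < (volume V).toReal := vol_toReal_pos hV
  refine ⟨C * (volume U).toReal / (volume V).toReal, ?_⟩
  rintro c ⟨f, hfc, hf0, hfpd, _, hfIU, rfl⟩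
  have key := hbound f hfc hf0 hfpd
  rw [div_le_iff₀ (by positivity : 0 < (volume U).toReal⁻¹ * ∫ x in U, f x)]
  calc (volume V).toReal⁻¹ * ∫ x in V, f x
      ≤ (volume V).toReal⁻¹ * (C * ∫ x in U, f x) :=
        mul_le_mul_of_nonneg_left key (by positivity)
    _ = C * (volume U).toReal / (volume V).toReal
        * ((volume U).toReal⁻¹ * ∫ x in U, f x) := by
      field_simp

end PDAux

/-- If `f : ℝⁿ → ℂ` is continuous positive definite then `|f|^{2k}` is
non-negative positive definite, and satisfies the doubling inequality. -/
theorem posdef_abs_pow {n : ℕ} (U V : Set (Fin n → ℝ))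
    (hU : IsSymConvexBody U) (hV : IsSymConvexBody V)
    (f : (Fin n → ℝ) → ℂ) (hc : Continuous f) (hpd : IsPosDefC f) (k : ℕ) :
    IsPosDefR (fun x => ‖f x‖ ^ (2 * k)) ∧
    (volume V).toReal⁻¹ * ∫ x in V, ‖f x‖ ^ (2 * k) ≤
      doublingConst n U V *
        ((volume U).toReal⁻¹ * ∫ x in U, ‖f x‖ ^ (2 * k)) := by
  classical
  refine ⟨PDAux.abs_pow_posdef hpd k, ?_⟩
  set g : (Fin n → ℝ) → ℝ := fun x => ‖f x‖ ^ (2*k) with hg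
  have hgc : Continuous g := (continuous_norm.comp hc).pow _
  have hg0 : ∀ x, 0 ≤ g x := fun x => pow_nonneg (norm_nonneg _) _
  have hgpd : IsPosDefR g := PDAux.abs_pow_posdef hpd k
  have hdc : doublingConst n U V = sSup (ratioSet n U V) := rfl
  by_cases hzero : g 0 = 0
  · -- the function vanishes identically
    have hf00 : ∀ x, g x = 0 := by
      intro x
      rcases Nat.eq_zero_or_pos k with hk | hk
      · exfalso; rw [hg] at hzero; simp [hk] at hzero
      · have hf0 : f 0 = 0 := by
          rw [hg] at hzero
          simp only at hzero
          have := pow_eq_zero_iff (n := 2*k) (by omega) |>.mp hzero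
          exact norm_eq_zero.mp this
        have hre : (f 0).re = 0 := by rw [hf0]; simp
        have hfx : ‖f x‖ ≤ 0 := by
          have := PDAux.abs_le_f0 hpd x
          linarith
        have habs : ‖f x‖ = 0 := le_antisymm hfx (norm_nonneg _)
        rw [hg]
        simp only [habs]
        exact zero_pow (by omega)
    have hgz : g = fun _ => (0:ℝ) := funext hf00
    rw [hgz]
    simp
  · have hgpos : 0 < g 0 := lt_of_le_of_ne (hg0 0) (Ne.symm hzero)
    obtain ⟨L0, hL0, hUbox⟩ := PDAux.body_contains_box hU
    obtain ⟨δc, hδc, hballc⟩ := Metric.continuousAt_iff.mp hgc.continuousAt (g 0 / 2)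
      (by positivity)
    set r := min L0 (δc/2) with hr
    have hr0 : 0 < r := lt_min hL0 (by positivity)
    set W := PDAux.box (fun _ : Fin n => -r) (2*r) with hW
    have hWU : W ⊆ U := subset_trans
      (by rw [hW]; exact PDAux.sym_box_mono (min_le_left _ _)) hUbox
    have hWg : ∀ x ∈ W, g 0 / 2 ≤ g x := by
      intro x hx
      rw [hW, PDAux.mem_sym_box] at hx
      have hd : dist x 0 ≤ r := dist_pi_le_iff hr0.le |>.mpr fun i => by
        rw [Real.dist_eq]
        simp only [Pi.zero_apply, sub_zero]
        rw [abs_le]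
        exact ⟨(hx i).1, (hx i).2.le⟩
      have hdist : dist x 0 < δc := by
        have := min_le_right L0 (δc/2)
        linarith
      have hball := hballc hdist
      rw [Real.dist_eq] at hball
      have := abs_lt.mp hball
      linarith [this.1, this.2]
    have hIU : 0 < ∫ x in U, g x := by
      have hIW : g 0 / 2 * (volume W).toReal ≤ ∫ x in W, g x :=
        setIntegral_ge_of_const_le_real (PDAux.measurableSet_box _ _)
          (PDAux.volume_box_lt_top _ (by positivity : (0:ℝ) ≤ 2*r)).ne hWg
          (PDAux.integrableOn_box hgc _ _)
      have hvol : (volume W).toReal = (2*r)^n :=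
        PDAux.volume_box_toReal _ (by positivity : (0:ℝ) ≤ 2*r)
      have hIWU : ∫ x in W, g x ≤ ∫ x in U, g x :=
        setIntegral_mono_set (hgc.continuousOn.integrableOn_compact hU.2.1)
          (Filter.Eventually.of_forall fun x => hg0 x)
          (HasSubset.Subset.eventuallyLE hWU)
      have hpow : (0:ℝ) < (2*r)^n := by positivity
      nlinarith
    have hne : g ≠ 0 := by
      intro h0
      apply hzero
      rw [h0]
      rfl
    have hmem : ((volume V).toReal⁻¹ * ∫ x in V, g x) /
        ((volume U).toReal⁻¹ * ∫ x in U, g x) ∈ ratioSet n U V :=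
      ⟨g, hgc, hg0, hgpd, hne, hIU, rfl⟩
    have hle := le_csSup (PDAux.ratio_bddAbove hU hV) hmem
    have ha : 0 < (volume U).toReal := PDAux.vol_toReal_pos hU
    have hden : 0 < (volume U).toReal⁻¹ * ∫ x in U, g x := mul_pos (inv_pos.mpr ha) hIU
    rw [div_le_iff₀ hden] at hle
    rw [hdc]
    exact hle
end
end

section
/- There exists a nonzero continuous non-negative positive definite function f : ℝ → ℝ and a point x₀ ≠ 0 such that f vanishes identically on a ball centered at x₀; hence the doubling property ∫_{B(x₀,2R)} f ≤ C ∫_{B(x₀,R)} f fails at points other than the origin for any constant C. -/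
open MeasureTheory Complex Pointwise

noncomputable section

/-- Positive definiteness for complex-valued functions on `ℝ`. -/
def IsPosDefC1 (f : ℝ → ℂ) : Prop :=
  ∀ (X : Finset ℝ) (c : ℝ → ℂ),
    0 ≤ (∑ a ∈ X, ∑ b ∈ X, c a * (starRingEnd ℂ) (c b) * f (a - b)).re ∧
    (∑ a ∈ X, ∑ b ∈ X, c a * (starRingEnd ℂ) (c b) * f (a - b)).im = 0

/-- Positive definiteness for real-valued functions on `ℝ`. -/
def IsPosDefR1 (f : ℝ → ℝ) : Prop :=
  IsPosDefC1 (fun x => (f x : ℂ))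

/-- The set of ratios `(|V|⁻¹ ∫_V f) / (|U|⁻¹ ∫_U f)` over nonzero continuous
non-negative positive definite `f : ℝ → ℝ`. -/
def tri (x : ℝ) : ℝ := max (1 - |x|) 0

def G (a : ℝ) : ℝ → ℝ := (Set.Icc (a - 2⁻¹) (a + 2⁻¹)).indicator 1

lemma Gmul (a b : ℝ) : (fun t => G a t * G b t)
    = (Set.Icc (max a b - 2⁻¹) (min a b + 2⁻¹)).indicator 1 := by
  funext t
  rw [G, G, ← Set.inter_indicator_mul, Set.Icc_inter_Icc, max_sub_sub_right, min_add_add_right]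
  simp [Set.indicator_apply]

lemma myOfRealIntegral (f : ℝ → ℝ) : ((∫ t, f t : ℝ) : ℂ) = ∫ t, ((f t : ℝ) : ℂ) := by
  exact integral_ofReal.symm

lemma G_integrable (a : ℝ) : Integrable (G a) := by
  rw [G, integrable_indicator_iff measurableSet_Icc]
  exact integrableOn_const (by rw [Real.volume_Icc]; exact ENNReal.ofReal_ne_top)

lemma Gmul_integrable (a b : ℝ) : Integrable (fun t => G a t * G b t) := by
  rw [Gmul, integrable_indicator_iff measurableSet_Icc]
  exact integrableOn_const (by rw [Real.volume_Icc]; exact ENNReal.ofReal_ne_top)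

lemma tri_eq_integral (a b : ℝ) : tri (a - b) = ∫ t, G a t * G b t := by
  rw [Gmul, integral_indicator_one measurableSet_Icc, measureReal_def, Real.volume_Icc,
    ENNReal.toReal_ofReal', tri]
  congr 1
  have h := max_sub_min_eq_abs a b
  have h2 := abs_sub_comm a b
  linarith

lemma tri_posdef : IsPosDefR1 tri := by
  intro X c
  set h : ℝ → ℂ := fun t => ∑ a ∈ X, c a * (G a t : ℂ) with hh
  have key : (∑ a ∈ X, ∑ b ∈ X, c a * (starRingEnd ℂ) (c b) * (tri (a - b) : ℂ))
      = Complex.ofReal (∫ t, Complex.normSq (h t)) := by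
    have step1 : ∀ a ∈ X, ∀ b ∈ X, c a * (starRingEnd ℂ) (c b) * (tri (a - b) : ℂ)
        = ∫ t, c a * (starRingEnd ℂ) (c b) * ((G a t * G b t : ℝ) : ℂ) := by
      intro a _ b _
      rw [tri_eq_integral, myOfRealIntegral, ← integral_const_mul]
    rw [Finset.sum_congr rfl fun a ha => Finset.sum_congr rfl fun b hb => step1 a ha b hb]
    have hint : ∀ a b : ℝ, Integrable (fun t => c a * (starRingEnd ℂ) (c b) * ((G a t * G b t : ℝ) : ℂ)) := by
      intro a b
      exact ((Gmul_integrable a b).ofReal.const_mul _)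
    rw [Finset.sum_congr rfl fun a _ => (integral_finset_sum X fun b _ => hint a b).symm,
      ← integral_finset_sum X (fun a _ => integrable_finset_sum X fun b _ => hint a b),
      myOfRealIntegral]
    congr 1
    funext t
    have : (∑ a ∈ X, ∑ b ∈ X, c a * (starRingEnd ℂ) (c b) * ((G a t * G b t : ℝ) : ℂ))
        = h t * (starRingEnd ℂ) (h t) := by
      rw [hh, map_sum, Finset.sum_mul_sum]
      refine Finset.sum_congr rfl fun a _ => Finset.sum_congr rfl fun b _ => ?_
      rw [map_mul, Complex.conj_ofReal]
      push_cast
      ring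
    rw [this, Complex.mul_conj]
  refine ⟨?_, ?_⟩
  · simp only []
    rw [key]
    rw [Complex.ofReal_re]
    exact integral_nonneg fun t => Complex.normSq_nonneg _
  · simp only []
    rw [key]
    rw [Complex.ofReal_im]

lemma tri_cont : Continuous tri := (continuous_const.sub _root_.continuous_abs).max continuous_const

def ratioSet1 (U V : Set ℝ) : Set ℝ :=
  { c | ∃ f : ℝ → ℝ, Continuous f ∧ (∀ x, 0 ≤ f x) ∧ IsPosDefR1 f ∧
      f ≠ 0 ∧ 0 < ∫ x in U, f x ∧
      c = ((volume V).toReal⁻¹ * ∫ x in V, f x) /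
          ((volume U).toReal⁻¹ * ∫ x in U, f x) }

/-- The sharp constant `C_1(U,V)`. -/
def doublingConst1 (U V : Set ℝ) : ℝ := sSup (ratioSet1 U V)

/-- There is a nonzero continuous non-negative positive definite `f : ℝ → ℝ`
vanishing on a ball centred at some `x₀ ≠ 0`, for which the doubling property
at `x₀` fails for every constant `C`. -/
theorem doubling_fails_off_origin :
    ∃ (f : ℝ → ℝ) (x₀ ε : ℝ), x₀ ≠ 0 ∧ 0 < ε ∧
      Continuous f ∧ (∀ x, 0 ≤ f x) ∧ IsPosDefR1 f ∧ f ≠ 0 ∧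
      (∀ x ∈ Metric.ball x₀ ε, f x = 0) ∧
      ∀ C : ℝ, ∃ R > 0,
        ¬ (∫ x in Metric.ball x₀ (2 * R), f x ≤ C * ∫ x in Metric.ball x₀ R, f x) := by

  refine ⟨tri, 2, 2⁻¹, by norm_num, by norm_num, tri_cont,
    fun x => le_max_right _ _, tri_posdef, ?_, ?_, ?_⟩
  · intro h
    have := congrFun h 0
    simp [tri] at this
  · intro x hx
    rw [Metric.mem_ball, Real.dist_eq, abs_lt] at hx
    have h1 : (1:ℝ) < |x| := lt_abs.2 (Or.inl (by linarith))
    exact max_eq_right (by linarith)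
  · intro C
    refine ⟨3/4, by norm_num, ?_⟩
    have h0 : (∫ x in Metric.ball (2:ℝ) (3/4), tri x) = 0 := by
      apply setIntegral_eq_zero_of_forall_eq_zero
      intro x hx
      rw [Metric.mem_ball, Real.dist_eq, abs_lt] at hx
      have h1 : (1:ℝ) < |x| := lt_abs.2 (Or.inl (by linarith))
      exact max_eq_right (by linarith)
    rw [h0, mul_zero, show (2:ℝ) * (3/4) = 3/2 by norm_num, not_le]
    have hint : IntegrableOn tri (Metric.ball (2:ℝ) (3/2)) :=
      ((tri_cont.continuousOn).integrableOn_compact (isCompact_closedBall 2 (3/2))).mono_set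
        Metric.ball_subset_closedBall
    rw [setIntegral_pos_iff_support_of_nonneg_ae (f := tri)
      (Filter.Eventually.of_forall fun x => le_max_right _ _) hint]
    have hsub : Set.Ioo (1/2:ℝ) 1 ⊆ Function.support tri ∩ Metric.ball 2 (3/2) := by
      intro x hx
      obtain ⟨hx1, hx2⟩ := hx
      refine ⟨?_, ?_⟩
      · rw [Function.mem_support, tri]
        have habs : |x| < 1 := abs_lt.2 ⟨by linarith, hx2⟩
        exact (lt_max_iff.2 (Or.inl (by linarith))).ne'
      · rw [Metric.mem_ball, Real.dist_eq, abs_lt]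
        constructor <;> linarith
    calc (0:ENNReal) < volume (Set.Ioo (1/2:ℝ) 1) := by rw [Real.volume_Ioo]; norm_num
      _ ≤ _ := measure_mono hsub
end
end
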